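/- Let R be a commutative ring, G ∈ M₂(R) unimodular, and E ∈ M₂(R) such that G and GE are congruent modulo R·det(G). Then GE is unimodular if and only if E is unimodular. -/
import Mathlib


open Matrix

theorem stmt2 {R : Type*} [CommRing R] (G E : Matrix (Fin 2) (Fin 2) R)
    (hG : Ideal.span {G 0 0, G 0 1, G 1 0, G 1 1} = (⊤ : Ideal R))
    (hcong : ∀ i j, (G * E) i j - G i j ∈ Ideal.span {G.det}) :
    Ideal.span {(G * E) 0 0, (G * E) 0 1, (G * E) 1 0, (G * E) 1 1} = (⊤ : Ideal R) ↔
      Ideal.span {E 0 0, E 0 1, E 1 0, E 1 1} = (⊤ : Ideal R) := by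
  constructor
  · intro hGE
    rw [eq_top_iff]
    rw [eq_top_iff] at hGE
    refine le_trans hGE ?_
    rw [Ideal.span_le]
    have hmemE : ∀ i j : Fin 2, E i j ∈ Ideal.span {E 0 0, E 0 1, E 1 0, E 1 1} := by
      intro i j; fin_cases i <;> fin_cases j <;> apply Ideal.subset_span <;> simp
    have key : ∀ i j : Fin 2, (G * E) i j ∈ Ideal.span {E 0 0, E 0 1, E 1 0, E 1 1} := by
      intro i j
      rw [Matrix.mul_apply]
      exact Ideal.sum_mem _ fun k _ => Ideal.mul_mem_left _ _ (hmemE k j)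
    intro x hx
    simp only [Set.mem_insert_iff, Set.mem_singleton_iff] at hx
    rcases hx with h | h | h | h <;> subst h <;> exact key _ _
  · intro hE
    set I := Ideal.span {(G * E) 0 0, (G * E) 0 1, (G * E) 1 0, (G * E) 1 1} with hI
    have hmemGE : ∀ i j : Fin 2, (G * E) i j ∈ I := by
      intro i j; fin_cases i <;> fin_cases j <;> apply Ideal.subset_span <;> simp
    have hdE : ∀ i j : Fin 2, G.det * E i j ∈ I := by
      intro i j
      have h1 : (adjugate G * (G * E)) i j = G.det * E i j := by
        rw [← Matrix.mul_assoc, Matrix.adjugate_mul, Matrix.smul_mul, Matrix.one_mul,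
          Matrix.smul_apply, smul_eq_mul]
      rw [← h1, Matrix.mul_apply]
      exact Ideal.sum_mem _ fun k _ => Ideal.mul_mem_left _ _ (hmemGE k j)
    have hdI : G.det ∈ I := by
      have h1 : (1 : R) ∈ Ideal.span {E 0 0, E 0 1, E 1 0, E 1 1} := hE ▸ trivial
      have h2 : Ideal.span {E 0 0, E 0 1, E 1 0, E 1 1} ≤
          Submodule.comap (LinearMap.mul R R G.det) I := by
        rw [Ideal.span_le]
        intro x hx
        simp only [Set.mem_insert_iff, Set.mem_singleton_iff] at hx
        rcases hx with h | h | h | h <;> subst h <;>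
          simpa using hdE _ _
      simpa using h2 h1
    have hspan : Ideal.span {G.det} ≤ I := by
      rw [Ideal.span_le]; simpa using hdI
    have hGmem : ∀ i j : Fin 2, G i j ∈ I := by
      intro i j
      have h3 : G i j = (G * E) i j - ((G * E) i j - G i j) := by ring
      rw [h3]
      exact Ideal.sub_mem _ (hmemGE i j) (hspan (hcong i j))
    rw [eq_top_iff, ← hG, Ideal.span_le]
    intro x hx
    simp only [Set.mem_insert_iff, Set.mem_singleton_iff] at hx
    rcases hx with h | h | h | h <;> subst h <;> exact hGmem _ _
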